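/- Let C be a finite tensor category over an algebraically closed field k of characteristic p > 0. Then the kernel of the group homomorphism φ : Aut_⊗(id_C) → Map(I, kˣ), g ↦ (i ↦ scalar of g on S_i), is exactly the p-primary part of the finite abelian group Aut_⊗(id_C), i.e. the subgroup of elements whose order is a power of p. -/

import Mathlib

open CategoryTheory CategoryTheory.MonoidalCategory CategoryTheory.Limits

attribute [local instance] CategoryTheory.Abelian.hasFiniteBiproducts

namespace Stmt18Aux

variable {C : Type*} [Category C]

/-- `n`-fold composition of an endomorphism with itself. -/
def mypow {X : C} (f : X ⟶ X) : ℕ → (X ⟶ X)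
  | 0 => 𝟙 X
  | n + 1 => f ≫ mypow f n

@[simp] lemma mypow_zero {X : C} (f : X ⟶ X) : mypow f 0 = 𝟙 X := rfl

lemma mypow_succ {X : C} (f : X ⟶ X) (n : ℕ) : mypow f (n + 1) = f ≫ mypow f n := rfl

lemma mypow_eq_pow {X : C} (f : End X) (n : ℕ) : mypow f n = f ^ n := by
  induction n with
  | zero => simp [End.one_def]
  | succ n ih => rw [mypow_succ, ih, pow_succ, End.mul_def]

lemma mypow_sandwich {X Y : C} (a : X ⟶ Y) (b : Y ⟶ X) (n : ℕ) :
    mypow (a ≫ b) (n + 1) = a ≫ mypow (b ≫ a) n ≫ b := by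
  induction n with
  | zero => simp [mypow]
  | succ n ih => rw [mypow_succ, ih, mypow_succ]; simp

lemma end_pow_app (gE : End (𝟭 C)) (n : ℕ) (X : C) :
    (gE ^ n).app X = mypow (gE.app X) n := by
  induction n with
  | zero => simp [End.one_def, mypow]
  | succ n ih => rw [pow_succ, End.mul_def, NatTrans.comp_app, ih, mypow_succ]

lemma mypow_eq_smul_id {k : Type*} [CommRing k] [Preadditive C] [CategoryTheory.Linear k C]
    {X : C} {f : X ⟶ X} {c : k} (hf : f = c • 𝟙 X) (n : ℕ) :
    mypow f n = c ^ n • 𝟙 X := by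
  induction n with
  | zero => simp
  | succ n ih =>
    rw [mypow_succ, ih, hf, CategoryTheory.Linear.smul_comp, CategoryTheory.Linear.comp_smul,
      smul_smul, Category.comp_id, pow_succ, mul_comm]

lemma eq_one_of_pow_p_pow {k : Type*} [Field k] (p : ℕ) [Fact p.Prime] [CharP k p]
    {c : k} {m : ℕ} (h : c ^ p ^ m = 1) : c = 1 := by
  induction m with
  | zero => simpa using h
  | succ m ih =>
    apply ih
    have h2 : (c ^ p ^ m) ^ p = 1 := by rw [← pow_mul, ← pow_succ]; exact h
    have h3 : frobenius k p (c ^ p ^ m) = frobenius k p 1 := by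
      rw [frobenius_def, h2, map_one]
    exact frobenius_inj k p h3

theorem nilpotent_of_id_on_simples [Abelian C] [∀ X : C, IsArtinianObject X]
    (f : ∀ A : C, A ⟶ A) (hnat : ∀ {A B : C} (t : A ⟶ B), f A ≫ t = t ≫ f B)
    (hsimple : ∀ (T : C) [Simple T], f T = 𝟙 T)
    (X : C) [IsNoetherianObject X] :
    ∃ n, mypow (f X - 𝟙 X) n = 0 := by
  suffices h : ∀ K : Subobject X, ∀ (W : C) (π : X ⟶ W), Epi π → kernelSubobject π = K →
      ∃ n, mypow (f W - 𝟙 W) n = 0 by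
    exact h (kernelSubobject (𝟙 X)) X (𝟙 X) inferInstance rfl
  intro K
  induction K using WellFounded.induction (wellFounded_gt (α := Subobject X)) with
  | _ K IH =>
  intro W π hπ hK
  by_cases hW : IsZero W
  · exact ⟨1, by simp [mypow, hW.eq_zero_of_src (f W - 𝟙 W)]⟩
  · set f' : W ⟶ W := f W - 𝟙 W with hf'
    have hnatf' : ∀ {A B : C} (t : A ⟶ B), t ≫ (f B - 𝟙 B) = (f A - 𝟙 A) ≫ t := by
      intro A B t
      simp [Preadditive.comp_sub, Preadditive.sub_comp, hnat t]
    set ι : (kernelSubobject f' : C) ⟶ W := (kernelSubobject f').arrow with hι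
    -- the kernel of f' is nonzero
    obtain ⟨Ys, hYs⟩ := exists_simple_subobject hW
    have hYarrow : Ys.arrow ≫ f' = 0 := by
      haveI := hYs
      rw [hf', hnatf' Ys.arrow, hsimple (Ys : C)]
      simp
    have hYle : Ys ≤ kernelSubobject f' := le_kernelSubobject _ _ hYarrow
    have hN : ¬ IsZero (kernelSubobject f' : C) := by
      intro h
      haveI := hYs
      apply Simple.not_isZero (Ys : C)
      rw [IsZero.iff_id_eq_zero]
      have harr : Ys.arrow = Subobject.ofLE _ _ hYle ≫ ι := by simp [hι]
      have h0 : Ys.arrow = 0 := by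
        rw [harr, h.eq_zero_of_tgt (Subobject.ofLE _ _ hYle), zero_comp]
      rw [← cancel_mono Ys.arrow]
      simp [h0]
    set π2 : W ⟶ cokernel ι := cokernel.π ι with hπ2
    set u : cokernel ι ⟶ W := cokernel.desc ι f' (kernelSubobject_arrow_comp f') with hu
    have hfu : π2 ≫ u = f' := cokernel.π_desc ι f' _
    have hu2 : u ≫ π2 = f (cokernel ι) - 𝟙 (cokernel ι) := by
      rw [← cancel_epi π2]
      have h1 : π2 ≫ (f (cokernel ι) - 𝟙 (cokernel ι)) = f' ≫ π2 := hnatf' π2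
      rw [← Category.assoc, hfu, h1]
    set K' := kernelSubobject (π ≫ π2) with hK'
    have hKK' : K ≤ K' := by rw [← hK]; exact kernelSubobject_comp_le π π2
    have hne : K ≠ K' := by
      intro he
      have h1 : pullback.snd ι π ≫ π ≫ π2 = 0 := by
        rw [← Category.assoc, ← pullback.condition, Category.assoc, cokernel.condition,
          comp_zero]
      have hK'π : K'.arrow ≫ π = 0 := by
        rw [← he, ← hK]
        exact kernelSubobject_arrow_comp π
      have h2 : pullback.snd ι π ≫ π = 0 := by
        have hfac : factorThruKernelSubobject (π ≫ π2) (pullback.snd ι π) h1 ≫ K'.arrow =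
            pullback.snd ι π := factorThruKernelSubobject_comp_arrow _ _ _
        rw [← hfac, Category.assoc, hK'π, comp_zero]
      have h3 : pullback.fst ι π ≫ ι = 0 := by rw [pullback.condition, h2]
      have h4 : pullback.fst ι π = 0 := by
        rw [← cancel_mono ι, zero_comp]; exact h3
      apply hN
      rw [IsZero.iff_id_eq_zero]
      rw [← cancel_epi (pullback.fst ι π)]
      simp [h4]
    obtain ⟨n, hn⟩ := IH K' (lt_of_le_of_ne hKK' hne) (cokernel ι) (π ≫ π2)
      (epi_comp _ _) rfl
    refine ⟨n + 1, ?_⟩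
    rw [show f' = π2 ≫ u from hfu.symm, mypow_sandwich, hu2, hn, zero_comp, comp_zero]

end Stmt18Aux

open Stmt18Aux

/-- Let `C` be a finite tensor category over an algebraically closed
field `k` of characteristic `p > 0`, with a complete family `S : ι → C` of simple
objects. An element `g ∈ Aut_⊗(id_C)` lies in the kernel of
`φ : Aut_⊗(id_C) → Map(ι, kˣ)` (i.e. acts as the identity on every simple object) if
and only if it lies in the `p`-primary part of the finite abelian group `Aut_⊗(id_C)`
(i.e. its order is a power of `p`). -/
theorem monoidalNatAut_ker_eq_primaryPart
    (k : Type*) [Field k] [IsAlgClosed k]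
    (p : ℕ) [CharP k p] (hp : 0 < p)
    {C : Type*} [Category C] [Abelian C] [Linear k C]
    [MonoidalCategory C] [MonoidalPreadditive C] [MonoidalLinear k C]
    [RigidCategory C] [Simple (𝟙_ C)]
    [∀ X : C, IsNoetherianObject X] [∀ X : C, IsArtinianObject X]
    [∀ X Y : C, FiniteDimensional k (X ⟶ Y)]
    (P : C) [Projective P]
    (hP : ∀ X : C, ∃ (n : ℕ) (q : (⨁ fun _ : Fin n => P) ⟶ X), Epi q)
    {ι : Type} [Fintype ι] (S : ι → C) [∀ i, Simple (S i)]
    (hcomplete : ∀ T : C, Simple T → ∃ i, Nonempty (T ≅ S i))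
    (g : 𝟭 C ⟶ 𝟭 C) (hg : NatTrans.IsMonoidal g) (hg' : IsIso g)
    (gE : End (𝟭 C)) (hgE : gE = g) :
    (∀ i, g.app (S i) = 𝟙 (S i)) ↔ (∃ m : ℕ, gE ^ (p ^ m) = 1) := by
  subst hgE
  haveI : NeZero p := ⟨hp.ne'⟩
  haveI hfact : Fact p.Prime := CharP.char_is_prime_of_pos k p
  constructor
  · -- forward direction
    intro hS
    have hsimple : ∀ (T : C) [Simple T], gE.app T = 𝟙 T := by
      intro T hT
      obtain ⟨i, ⟨e⟩⟩ := hcomplete T hT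
      have hnat := gE.naturality e.hom
      simp only [Functor.id_map] at hnat
      calc gE.app T = (gE.app T ≫ e.hom) ≫ e.inv := by simp
        _ = (e.hom ≫ gE.app (S i)) ≫ e.inv := by rw [hnat]
        _ = 𝟙 T := by rw [hS i]; simp
    -- P is not zero
    have hP1 : 𝟙 P ≠ 0 := by
      intro h0
      obtain ⟨n0, q, hq⟩ := hP (𝟙_ C)
      have hBzero : 𝟙 (⨁ fun _ : Fin n0 => P) = 0 := by
        apply biproduct.hom_ext
        intro j
        rw [Category.id_comp, zero_comp, ← Category.comp_id (biproduct.π _ j), h0, comp_zero]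
      have hq0 : q = 0 := by rw [← Category.id_comp q, hBzero, zero_comp]
      apply id_nonzero (𝟙_ C)
      rw [← cancel_epi q, hq0, comp_zero, zero_comp]
    haveI : Nontrivial (End P) := ⟨⟨𝟙 P, 0, hP1⟩⟩
    haveI : CharP (End P) p := charP_of_injective_algebraMap (algebraMap k (End P)).injective p
    obtain ⟨n, hn⟩ := nilpotent_of_id_on_simples (fun A => gE.app A)
      (fun {A B} t => by simpa using (gE.naturality t).symm) hsimple P
    refine ⟨n, ?_⟩
    -- on P, g ^ (p ^ n) is the identity
    have keyP : (gE ^ (p ^ n)).app P = 𝟙 P := by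
      have h1 : ∀ b : End P, b = gE.app P → b ^ p ^ n = 1 := by
        intro b hb
        have hb1 : (b - 1) ^ n = 0 := by
          rw [← mypow_eq_pow, hb]
          exact hn
        have h2 : (b - 1) ^ p ^ n = 0 :=
          pow_eq_zero_of_le (Nat.le_of_lt (Nat.lt_pow_self (n := n) hfact.out.one_lt)) hb1
        rw [← sub_add_cancel b 1, add_pow_char_pow_of_commute _ _ (Commute.one_right _), h2,
          one_pow, zero_add]
      rw [end_pow_app, mypow_eq_pow]
      exact h1 (gE.app P) rfl
    have happ : ∀ X : C, (gE ^ (p ^ n)).app X = 𝟙 X := by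
      intro X
      obtain ⟨nX, q, hq⟩ := hP X
      have hB : (gE ^ (p ^ n)).app (⨁ fun _ : Fin nX => P) = 𝟙 _ := by
        apply biproduct.hom_ext
        intro j
        have hnatj := (gE ^ (p ^ n)).naturality (biproduct.π (fun _ : Fin nX => P) j)
        simp only [Functor.id_map] at hnatj
        rw [Category.id_comp, ← hnatj, keyP]
        simp
      have hq2 := (gE ^ (p ^ n)).naturality q
      simp only [Functor.id_map] at hq2
      rw [hB, Category.id_comp] at hq2
      rw [← cancel_epi q, hq2, Category.comp_id]
    exact NatTrans.ext (funext happ)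
  · -- backward direction
    rintro ⟨m, hm⟩ i
    have happ : (gE ^ (p ^ m)).app (S i) = 𝟙 (S i) := by rw [hm]; rfl
    rw [end_pow_app] at happ
    obtain ⟨c, hc⟩ := endomorphism_simple_eq_smul_id k (X := S i) (gE.app (S i))
    have hc' : gE.app (S i) = c • 𝟙 (S i) := hc.symm
    have h3 : (c ^ p ^ m : k) • 𝟙 (S i) = 𝟙 (S i) := by
      exact (mypow_eq_smul_id hc' (p ^ m)).symm.trans happ
    have hc1 : c ^ p ^ m = 1 := by
      by_contra hne
      have h4 : (c ^ p ^ m - 1 : k) • 𝟙 (S i) = 0 := by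
        rw [sub_smul, one_smul, h3, sub_self]
      apply id_nonzero (S i)
      have h5 := congrArg (fun x => (c ^ p ^ m - 1 : k)⁻¹ • x) h4
      simpa [smul_smul, inv_mul_cancel₀ (sub_ne_zero.mpr hne)] using h5
    have : c = 1 := eq_one_of_pow_p_pow p hc1
    rw [hc', this, one_smul]
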